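/- For n ≥ 3, there exists no Q-nonsingular quadratic harmonic morphism φ: ℝ^{2m} → ℝ^n whose positive eigenvalues λ₁,…,λ_m are pairwise distinct. -/

import Mathlib

open Matrix BigOperators

/-- Partial derivative in the `i`-th coordinate direction. -/
noncomputable def pderiv {m : ℕ} (i : Fin m) (f : (Fin m → ℝ) → ℝ) : (Fin m → ℝ) → ℝ :=
  fun x => fderiv ℝ f x (Pi.single i 1)

/-- A map `ℝ^m → ℝ^n` is a harmonic morphism iff each component is harmonic and
the map is horizontally weakly conformal. -/
def IsHarmonicMorphism {m n : ℕ} (φ : (Fin m → ℝ) → (Fin n → ℝ)) : Prop :=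
  (∀ (α : Fin n) (x : Fin m → ℝ), ∑ i : Fin m, pderiv i (pderiv i fun y => φ y α) x = 0) ∧
  ∃ lam : (Fin m → ℝ) → ℝ, ∀ (x : Fin m → ℝ) (α β : Fin n),
      ∑ i : Fin m, pderiv i (fun y => φ y α) x * pderiv i (fun y => φ y β) x
        = lam x ^ 2 * (if α = β then 1 else 0)

/-- `A` is the family of symmetric component matrices of the quadratic map `φ`;
the components are genuine (nonzero) quadratic forms. -/
def Represents {m n : ℕ} (A : Fin n → Matrix (Fin m) (Fin m) ℝ)
    (φ : (Fin m → ℝ) → (Fin n → ℝ)) : Prop :=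
  (∀ α, (A α).IsSymm) ∧ (∀ α, A α ≠ 0) ∧ ∀ x α, φ x α = x ⬝ᵥ (A α).mulVec x

/-- A quadratic harmonic morphism. -/
def IsQuadraticHM {m n : ℕ} (φ : (Fin m → ℝ) → (Fin n → ℝ)) : Prop :=
  (∃ A, Represents A φ) ∧ IsHarmonicMorphism φ

/-- `μ` is an eigenvalue of `A`. -/
def HasEigen {m : ℕ} (A : Matrix (Fin m) (Fin m) ℝ) (μ : ℝ) : Prop :=
  ∃ v : Fin m → ℝ, v ≠ 0 ∧ A.mulVec v = μ • v

/-- `φ` is Q-nonsingular: the common rank of the component matrices equals the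
domain dimension. -/
def QNonsingular {m n : ℕ} (φ : (Fin m → ℝ) → (Fin n → ℝ)) : Prop :=
  ∃ A, Represents A φ ∧ ∀ α, (A α).rank = m

/-- `φ` is umbilical: all positive eigenvalues of the component matrices are equal. -/
def Umbilical {m n : ℕ} (φ : (Fin m → ℝ) → (Fin n → ℝ)) : Prop :=
  ∃ A, Represents A φ ∧ ∀ (α : Fin n) (μ ν : ℝ), 0 < μ → 0 < ν →
    HasEigen (A α) μ → HasEigen (A α) ν → μ = ν

/-- `φ ∈ H₂¹(m,n)`: umbilical quadratic harmonic morphism with positive eigenvalue 1. -/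
def MemH21 {m n : ℕ} (φ : (Fin m → ℝ) → (Fin n → ℝ)) : Prop :=
  IsQuadraticHM φ ∧ ∃ A, Represents A φ ∧
    ∀ α : Fin n, HasEigen (A α) 1 ∧ ∀ μ : ℝ, 0 < μ → HasEigen (A α) μ → μ = 1

/-- `G` is an orthogonal matrix. -/
def IsOrthoMat {m : ℕ} (G : Matrix (Fin m) (Fin m) ℝ) : Prop := Gᵀ * G = 1

/-- Domain-equivalence: `φ = ψ ∘ G` for an orthogonal `G`. -/
def DomainEquiv {m n : ℕ} (φ ψ : (Fin m → ℝ) → (Fin n → ℝ)) : Prop :=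
  ∃ G : Matrix (Fin m) (Fin m) ℝ, IsOrthoMat G ∧ ∀ x, φ x = ψ (G.mulVec x)

/-- Bi-equivalence: `φ = H⁻¹ ∘ ψ ∘ G` for orthogonal `G`, `H`. -/
def BiEquiv {m n : ℕ} (φ ψ : (Fin m → ℝ) → (Fin n → ℝ)) : Prop :=
  ∃ (G : Matrix (Fin m) (Fin m) ℝ) (H : Matrix (Fin n) (Fin n) ℝ),
    IsOrthoMat G ∧ IsOrthoMat H ∧ ∀ x, φ x = H⁻¹.mulVec (ψ (G.mulVec x))

/-- A Clifford system: symmetric endomorphisms with `PᵢPⱼ + PⱼPᵢ = 2δᵢⱼ Id`. -/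
def IsCliffordSystem {N n : ℕ} (P : Fin n → Matrix (Fin N) (Fin N) ℝ) : Prop :=
  (∀ i, (P i).IsSymm) ∧
  ∀ i j, P i * P j + P j * P i =
    if i = j then (2 : ℝ) • (1 : Matrix (Fin N) (Fin N) ℝ) else 0

/-- The map `F` sending a Clifford system to the quadratic map
`X ↦ (⟨P₁X,X⟩,…,⟨PₙX,X⟩)`. -/
def cliffordMap {N n : ℕ} (P : Fin n → Matrix (Fin N) (Fin N) ℝ) :
    (Fin N → ℝ) → Fin n → ℝ := fun X α => X ⬝ᵥ (P α).mulVec X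

/-- Algebraic equivalence of Clifford systems. -/
def CliffordAlgEquiv {N n : ℕ} (P Q : Fin n → Matrix (Fin N) (Fin N) ℝ) : Prop :=
  ∃ A : Matrix (Fin N) (Fin N) ℝ, IsOrthoMat A ∧ ∀ i, Q i = A * P i * Aᵀ

/-- Irreducibility: the space is not a direct sum of two nontrivial invariant subspaces. -/
def CliffordIrreducible {N n : ℕ} (P : Fin n → Matrix (Fin N) (Fin N) ℝ) : Prop :=
  ¬∃ U V : Submodule ℝ (Fin N → ℝ), U ≠ ⊥ ∧ V ≠ ⊥ ∧ IsCompl U V ∧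
    (∀ i, ∀ x ∈ U, (P i).mulVec x ∈ U) ∧ ∀ i, ∀ x ∈ V, (P i).mulVec x ∈ V

/-- An O-system: orthogonal endomorphisms with `τᵢᵗτⱼ + τⱼᵗτᵢ = 2δᵢⱼ Id`. -/
def IsOSystem {m n : ℕ} (τ : Fin n → Matrix (Fin m) (Fin m) ℝ) : Prop :=
  (∀ i, (τ i)ᵀ * τ i = 1) ∧
  ∀ i j, (τ i)ᵀ * τ j + (τ j)ᵀ * τ i =
    if i = j then (2 : ℝ) • (1 : Matrix (Fin m) (Fin m) ℝ) else 0

/-- Algebraic equivalence of O-systems. -/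
def OAlgEquiv {m n : ℕ} (τ ρ : Fin n → Matrix (Fin m) (Fin m) ℝ) : Prop :=
  ∃ θ : Matrix (Fin m) (Fin m) ℝ, IsOrthoMat θ ∧ ∀ i, ρ i = θ * τ i * θᵀ

/-- Block-diagonal direct sum of square matrices. -/
def bdiag {m l : ℕ} (A : Matrix (Fin m) (Fin m) ℝ) (B : Matrix (Fin l) (Fin l) ℝ) :
    Matrix (Fin (m + l)) (Fin (m + l)) ℝ :=
  (Matrix.fromBlocks A 0 0 B).submatrix finSumFinEquiv.symm finSumFinEquiv.symm

/-- The block matrix `[[I,0],[0,-I]]`. -/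
def assocP0 (m : ℕ) : Matrix (Fin (m + m)) (Fin (m + m)) ℝ :=
  (Matrix.fromBlocks 1 0 0 (-1)).submatrix finSumFinEquiv.symm finSumFinEquiv.symm

/-- The block matrix `[[0,τ],[τᵗ,0]]`. -/
def assocPi {m : ℕ} (τ : Matrix (Fin m) (Fin m) ℝ) : Matrix (Fin (m + m)) (Fin (m + m)) ℝ :=
  (Matrix.fromBlocks 0 τ τᵀ 0).submatrix finSumFinEquiv.symm finSumFinEquiv.symm

/-- The Clifford system `(P₀,P₁,…,Pₙ)` associated to an O-system `(τ₁,…,τₙ)`. -/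
def assocClifford {m n : ℕ} (τ : Fin n → Matrix (Fin m) (Fin m) ℝ) :
    Fin (n + 1) → Matrix (Fin (m + m)) (Fin (m + m)) ℝ :=
  Fin.cons (assocP0 m) fun j => assocPi (τ j)

/-- Direct sum of two maps: `(φ ⊕ ψ)(x,y) = φ(x) + ψ(y)`. -/
def dsum {m l n : ℕ} (φ : (Fin m → ℝ) → Fin n → ℝ) (ψ : (Fin l → ℝ) → Fin n → ℝ) :
    (Fin (m + l) → ℝ) → Fin n → ℝ :=
  fun x => φ (fun i => x (Fin.castAdd l i)) + ψ fun j => x (Fin.natAdd m j)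

/-- Transport a map along an equality of domain dimensions. -/
def reMap {a b n : ℕ} (h : a = b) (ψ : (Fin b → ℝ) → Fin n → ℝ) :
    (Fin a → ℝ) → Fin n → ℝ := fun x => ψ fun i => x (finCongr h.symm i)

/-- A separable quadratic harmonic morphism. -/
def Separable {M n : ℕ} (φ : (Fin M → ℝ) → Fin n → ℝ) : Prop :=
  ∃ (m l : ℕ) (h : M = m + l), 0 < m ∧ 0 < l ∧
    ∃ (φ₁ : (Fin m → ℝ) → Fin n → ℝ) (φ₂ : (Fin l → ℝ) → Fin n → ℝ),
      IsQuadraticHM φ₁ ∧ IsQuadraticHM φ₂ ∧ φ = reMap h (dsum φ₁ φ₂)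

/-- The `k`-fold direct sum `ψ₁ ⊕ … ⊕ ψₖ` of maps with the same domain dimension. -/
def bigDSum {k M n : ℕ} (ψ : Fin k → (Fin M → ℝ) → Fin n → ℝ) :
    (Fin (k * M) → ℝ) → Fin n → ℝ :=
  fun x => ∑ j : Fin k, ψ j fun i => x (finProdFinEquiv (j, i))

/-- Domain-minimality: no quadratic harmonic morphism into `ℝ^n` exists from a
smaller-dimensional domain. -/
def DomainMinimal {M n : ℕ} (φ : (Fin M → ℝ) → Fin n → ℝ) : Prop :=
  IsQuadraticHM φ ∧ ∀ M' : ℕ, M' < M → ¬∃ ψ : (Fin M' → ℝ) → Fin n → ℝ, IsQuadraticHM ψ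

/-- `m(n)`: dimensions of irreducible Clifford systems;
`m(1)=1, m(2)=2, m(3)=m(4)=4, m(5)=…=m(8)=8, m(n+8)=16m(n)`. -/
def mfun : ℕ → ℕ
  | 0 => 1
  | 1 => 1
  | 2 => 2
  | 3 => 4
  | 4 => 4
  | 5 => 8
  | 6 => 8
  | 7 => 8
  | 8 => 8
  | n + 9 => 16 * mfun (n + 1)

/-- The Hurwitz–Radon number: for `m = (2r+1)·2^(c+4d)` with `0 ≤ c ≤ 3`,
`σ(m) = 2^c + 8d`. -/
def hrSigma (m : ℕ) : ℕ := 2 ^ (padicValNat 2 m % 4) + 8 * (padicValNat 2 m / 4)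

/-! ### Auxiliary lemmas -/

lemma mat_eq_zero_of_dot {N : ℕ} {B : Matrix (Fin N) (Fin N) ℝ}
    (h : ∀ x y : Fin N → ℝ, x ⬝ᵥ B.mulVec y = 0) : B = 0 := by
  ext i j
  simpa [Matrix.mulVec_single, dotProduct_single] using h (Pi.single i 1) (Pi.single j 1)

lemma dot_transpose {N : ℕ} (M : Matrix (Fin N) (Fin N) ℝ) (x y : Fin N → ℝ) :
    x ⬝ᵥ Mᵀ.mulVec y = y ⬝ᵥ M.mulVec x := by
  rw [dotProduct_comm, Matrix.dotProduct_mulVec, ← Matrix.mulVec_transpose]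

lemma add_transpose_eq_zero_of_quad {N : ℕ} {M : Matrix (Fin N) (Fin N) ℝ}
    (h : ∀ x : Fin N → ℝ, x ⬝ᵥ M.mulVec x = 0) : M + Mᵀ = 0 := by
  apply mat_eq_zero_of_dot
  intro x y
  have hxy := h (x + y)
  rw [Matrix.mulVec_add, dotProduct_add, add_dotProduct,
    add_dotProduct, h x, h y] at hxy
  rw [Matrix.add_mulVec, dotProduct_add, dot_transpose]
  linarith

lemma symm_quad_zero {N : ℕ} {B : Matrix (Fin N) (Fin N) ℝ} (hB : B.IsSymm)
    (h : ∀ x : Fin N → ℝ, x ⬝ᵥ B.mulVec x = 0) : B = 0 := by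
  have h2 := add_transpose_eq_zero_of_quad h
  rw [hB.eq] at h2
  ext i j
  have h4 : B i j + B i j = 0 := by simpa using congrFun (congrFun h2 i) j
  show B i j = (0 : Matrix (Fin N) (Fin N) ℝ) i j
  simp only [Matrix.zero_apply]
  linarith

lemma pderiv_quad {N : ℕ} (A : Matrix (Fin N) (Fin N) ℝ) (hA : A.IsSymm) (i : Fin N)
    (x : Fin N → ℝ) :
    pderiv i (fun y => y ⬝ᵥ A.mulVec y) x = 2 * A.mulVec x i := by
  have hquad : (fun y : Fin N → ℝ => y ⬝ᵥ A.mulVec y)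
      = fun y => ∑ a : Fin N, ∑ b : Fin N, A a b * (y a * y b) := by
    funext y
    simp only [dotProduct, Matrix.mulVec, Finset.mul_sum]
    refine Finset.sum_congr rfl fun a _ => Finset.sum_congr rfl fun b _ => by ring
  have hterm : ∀ a b : Fin N, HasFDerivAt (fun y : Fin N → ℝ => A a b * (y a * y b))
      (A a b • (x a • (ContinuousLinearMap.proj b : (Fin N → ℝ) →L[ℝ] ℝ)
        + x b • (ContinuousLinearMap.proj a : (Fin N → ℝ) →L[ℝ] ℝ))) x := by
    intro a b
    exact (((ContinuousLinearMap.proj a : (Fin N → ℝ) →L[ℝ] ℝ).hasFDerivAt.mul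
      (ContinuousLinearMap.proj b : (Fin N → ℝ) →L[ℝ] ℝ).hasFDerivAt)).const_mul _
  have hsum : HasFDerivAt (fun y : Fin N → ℝ => ∑ a : Fin N, ∑ b : Fin N, A a b * (y a * y b))
      (∑ a : Fin N, ∑ b : Fin N, A a b • (x a • (ContinuousLinearMap.proj b : (Fin N → ℝ) →L[ℝ] ℝ)
        + x b • (ContinuousLinearMap.proj a : (Fin N → ℝ) →L[ℝ] ℝ))) x :=
    HasFDerivAt.fun_sum fun a _ => HasFDerivAt.fun_sum fun b _ => hterm a b
  rw [pderiv, hquad, hsum.fderiv]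
  simp only [ContinuousLinearMap.coe_sum', Finset.sum_apply, ContinuousLinearMap.smul_apply,
    ContinuousLinearMap.add_apply, ContinuousLinearMap.proj_apply, smul_eq_mul]
  have hsingle : ∀ c : Fin N, (Pi.single i 1 : Fin N → ℝ) c = if c = i then 1 else 0 := by
    intro c; simp [Pi.single_apply]
  simp only [hsingle]
  have key : ∀ a : Fin N, ∑ b : Fin N, A a b * (x a * (if b = i then (1:ℝ) else 0)
      + x b * (if a = i then 1 else 0))
      = A a i * x a + (if a = i then ∑ b, A a b * x b else 0) := by
    intro a
    simp only [mul_add]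
    rw [Finset.sum_add_distrib]
    congr 1
    · rw [Finset.sum_congr rfl (fun b _ => show A a b * (x a * if b = i then (1:ℝ) else 0)
        = if b = i then A a i * x a else 0 by by_cases h : b = i <;> simp [h, mul_comm])]
      simp
    · by_cases h : a = i <;> simp [h, mul_comm]
  rw [Finset.sum_congr rfl fun a _ => key a, Finset.sum_add_distrib]
  simp only [Finset.sum_ite_eq', Finset.mem_univ, if_true]
  rw [Finset.sum_congr rfl fun a _ => by rw [(hA.apply a i).symm]]
  simp [Matrix.mulVec, dotProduct]
  ring

lemma mulVec_injective_of_rank {N : ℕ} {A : Matrix (Fin N) (Fin N) ℝ} (h : A.rank = N) :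
    Function.Injective A.mulVec := by
  have hr : LinearMap.range A.mulVecLin = ⊤ := by
    apply Submodule.eq_top_of_finrank_eq
    rw [← Matrix.rank, h, Module.finrank_pi]
    simp
  exact (LinearMap.injective_iff_surjective).mpr (LinearMap.range_eq_top.mp hr)

lemma isHermitian_of_isSymm {N : ℕ} {A : Matrix (Fin N) (Fin N) ℝ} (h : A.IsSymm) :
    A.IsHermitian := by
  rw [Matrix.IsHermitian, Matrix.conjTranspose_eq_transpose_of_trivial]
  exact h

lemma coeff_eq_zero {N : ℕ} {A : Matrix (Fin N) (Fin N) ℝ} (hA : A.IsHermitian)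
    {v : Fin N → ℝ} {μ : ℝ} (hv : A.mulVec v = μ • v) (j : Fin N)
    (hj : hA.eigenvalues j ≠ μ) : ⇑(hA.eigenvectorBasis j) ⬝ᵥ v = 0 := by
  have htr : Aᵀ = A := by
    rw [← Matrix.conjTranspose_eq_transpose_of_trivial]; exact hA
  have h1 : A *ᵥ ⇑(hA.eigenvectorBasis j) = hA.eigenvalues j • ⇑(hA.eigenvectorBasis j) :=
    hA.mulVec_eigenvectorBasis j
  have h2 : ⇑(hA.eigenvectorBasis j) ⬝ᵥ (A *ᵥ v)
      = hA.eigenvalues j * (⇑(hA.eigenvectorBasis j) ⬝ᵥ v) := by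
    rw [Matrix.dotProduct_mulVec, ← Matrix.mulVec_transpose, htr, h1,
      smul_dotProduct, smul_eq_mul]
  rw [hv, dotProduct_smul] at h2
  have h3 := sub_eq_zero.mpr h2
  rw [smul_eq_mul, ← sub_mul] at h3
  rcases mul_eq_zero.mp h3 with h | h
  · exact absurd (by linarith [sub_eq_zero.mp h] : hA.eigenvalues j = μ) hj
  · exact h

lemma eq_zero_of_coeffs {N : ℕ} {A : Matrix (Fin N) (Fin N) ℝ} (hA : A.IsHermitian)
    {v : Fin N → ℝ} (h : ∀ j, ⇑(hA.eigenvectorBasis j) ⬝ᵥ v = 0) : v = 0 := by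
  let v' : EuclideanSpace ℝ (Fin N) := WithLp.toLp 2 v
  have hrep : ∀ j, hA.eigenvectorBasis.repr v' j = 0 := by
    intro j
    rw [OrthonormalBasis.repr_apply_apply, PiLp.inner_apply]
    simpa [dotProduct, v', mul_comm] using h j
  have h0 : hA.eigenvectorBasis.repr v' = 0 := by ext j; exact hrep j
  have : v' = 0 := (hA.eigenvectorBasis.repr).map_eq_zero_iff.mp h0
  simpa [v'] using congrArg WithLp.ofLp this

lemma basis_nonzero {N : ℕ} {A : Matrix (Fin N) (Fin N) ℝ} (hA : A.IsHermitian) (j : Fin N) :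
    (⇑(hA.eigenvectorBasis j) : Fin N → ℝ) ≠ 0 := by
  intro h
  exact hA.eigenvectorBasis.orthonormal.ne_zero j (by simpa using congrArg (WithLp.toLp 2) h)

lemma exists_eigen_index {N : ℕ} {A : Matrix (Fin N) (Fin N) ℝ} (hA : A.IsHermitian)
    {v : Fin N → ℝ} {μ : ℝ} (hv0 : v ≠ 0) (hv : A.mulVec v = μ • v) :
    ∃ j, hA.eigenvalues j = μ := by
  by_contra h
  push_neg at h
  exact hv0 (eq_zero_of_coeffs hA fun j => coeff_eq_zero hA hv j (h j))

lemma basis_dot {N : ℕ} {A : Matrix (Fin N) (Fin N) ℝ} (hA : A.IsHermitian) (i j : Fin N) :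
    ⇑(hA.eigenvectorBasis i) ⬝ᵥ ⇑(hA.eigenvectorBasis j) = if i = j then 1 else 0 := by
  have h := orthonormal_iff_ite.mp hA.eigenvectorBasis.orthonormal i j
  rw [PiLp.inner_apply] at h
  simpa [dotProduct, mul_comm] using h

lemma eigvec_parallel {N : ℕ} {A : Matrix (Fin N) (Fin N) ℝ} (hA : A.IsHermitian)
    (hinj : Function.Injective hA.eigenvalues) {u w : Fin N → ℝ} {μ : ℝ}
    (hu : A.mulVec u = μ • u) (hw : A.mulVec w = μ • w) (hu0 : u ≠ 0) :
    ∃ c : ℝ, w = c • u := by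
  obtain ⟨j₀, hj₀⟩ := exists_eigen_index hA hu0 hu
  have claim : ∀ v : Fin N → ℝ, A.mulVec v = μ • v →
      v = (⇑(hA.eigenvectorBasis j₀) ⬝ᵥ v) • ⇑(hA.eigenvectorBasis j₀) := by
    intro v hv
    have hz : ∀ j, ⇑(hA.eigenvectorBasis j) ⬝ᵥ
        (v - (⇑(hA.eigenvectorBasis j₀) ⬝ᵥ v) • ⇑(hA.eigenvectorBasis j₀)) = 0 := by
      intro j
      rw [dotProduct_sub, dotProduct_smul, basis_dot hA j j₀]
      rcases eq_or_ne j j₀ with h | h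
      · subst h; simp
      · have hne : hA.eigenvalues j ≠ μ := fun hc => h (hinj (hc.trans hj₀.symm))
        rw [coeff_eq_zero hA hv j hne]
        simp [h]
    have := eq_zero_of_coeffs hA hz
    rwa [sub_eq_zero] at this
  have hu' := claim u hu
  have hw' := claim w hw
  set cu := ⇑(hA.eigenvectorBasis j₀) ⬝ᵥ u with hcu
  set cw := ⇑(hA.eigenvectorBasis j₀) ⬝ᵥ w with hcw
  have hcu0 : cu ≠ 0 := by
    intro h; apply hu0; rw [hu', h, zero_smul]
  refine ⟨cw / cu, ?_⟩
  rw [hw', hu', smul_smul, div_mul_cancel₀ _ hcu0]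

lemma inj_of_card {N : ℕ} (e : Fin N → ℝ) (T : Finset ℝ) (hT : T.card = N)
    (hmem : ∀ j, e j ∈ T) (hsurj : ∀ t ∈ T, ∃ j, e j = t) : Function.Injective e := by
  have himg : Finset.image e Finset.univ = T := by
    apply Finset.Subset.antisymm
    · intro t ht
      obtain ⟨j, _, hj⟩ := Finset.mem_image.mp ht
      exact hj ▸ hmem j
    · intro t ht
      obtain ⟨j, hj⟩ := hsurj t ht
      exact Finset.mem_image.mpr ⟨j, Finset.mem_univ j, hj⟩
  have hcard : (Finset.image e Finset.univ).card = (Finset.univ : Finset (Fin N)).card := by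
    rw [himg, hT, Finset.card_univ, Fintype.card_fin]
  have h := Finset.injOn_of_card_image_eq hcard
  intro a b hab
  exact h (Finset.mem_coe.mpr (Finset.mem_univ a)) (Finset.mem_coe.mpr (Finset.mem_univ b)) hab

lemma anti_eigen {N : ℕ} {A B : Matrix (Fin N) (Fin N) ℝ} (h : A * B + B * A = 0)
    {v : Fin N → ℝ} {μ : ℝ} (hv : A.mulVec v = μ • v) :
    A.mulVec (B.mulVec v) = (-μ) • B.mulVec v := by
  have hAB : A * B = -(B * A) := eq_neg_of_add_eq_zero_left h
  rw [Matrix.mulVec_mulVec, hAB, Matrix.neg_mulVec, ← Matrix.mulVec_mulVec, hv,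
    Matrix.mulVec_smul, ← neg_smul]

/-- For `n ≥ 3` there is no Q-nonsingular quadratic harmonic
morphism `ℝ^{2m} → ℝ^n` whose positive eigenvalues `λ₁,…,λ_m` are pairwise
distinct. -/
theorem no_qnonsingular_qhm_with_distinct_eigenvalues (m n : ℕ) (hn : 3 ≤ n) :
    ¬∃ (φ : (Fin (m + m) → ℝ) → Fin n → ℝ)
        (A : Fin n → Matrix (Fin (m + m)) (Fin (m + m)) ℝ) (lam : Fin m → ℝ),
        IsQuadraticHM φ ∧ QNonsingular φ ∧ Represents A φ ∧
          (∀ i, 0 < lam i) ∧ Function.Injective lam ∧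
            ∀ (α : Fin n) (μ : ℝ), 0 < μ →
              (HasEigen (A α) μ ↔ ∃ i, lam i = μ) := by
  
  rintro ⟨φ, A, lam, hQHM, hQN, ⟨hsymm, hne, hφ⟩, hpos, hlaminj, hiff⟩
  -- trivial case m = 0
  rcases Nat.eq_zero_or_pos m with hm0 | hm
  · subst hm0
    refine hne ⟨0, by omega⟩ ?_
    ext i j
    exact absurd i.isLt (by omega)
  -- A coincides with the Q-nonsingular representative
  obtain ⟨A', ⟨hsymm', _, hφ'⟩, hrank'⟩ := hQN
  have hAA' : A = A' := by
    funext α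
    have hq : ∀ x : Fin (m + m) → ℝ, x ⬝ᵥ (A α - A' α).mulVec x = 0 := by
      intro x
      rw [Matrix.sub_mulVec, dotProduct_sub, ← hφ x α, ← hφ' x α, sub_self]
    exact sub_eq_zero.mp (symm_quad_zero ((hsymm α).sub (hsymm' α)) hq)
  have hrank : ∀ α, (A α).rank = m + m := by rw [hAA']; exact hrank'
  have hAinj : ∀ α, Function.Injective (A α).mulVec :=
    fun α => mulVec_injective_of_rank (hrank α)
  -- consequences of horizontal weak conformality
  obtain ⟨lamf, hHWC⟩ := hQHM.2.2
  have hpd : ∀ (α : Fin n) (i : Fin (m + m)) (x : Fin (m + m) → ℝ),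
      pderiv i (fun y => φ y α) x = 2 * (A α).mulVec x i := by
    intro α i x
    have h : (fun y => φ y α) = fun y => y ⬝ᵥ (A α).mulVec y := funext fun y => hφ y α
    rw [h, pderiv_quad _ (hsymm α)]
  have hdot : ∀ (x : Fin (m + m) → ℝ) (α β : Fin n),
      ((A α).mulVec x) ⬝ᵥ ((A β).mulVec x)
        = lamf x ^ 2 * (if α = β then 1 else 0) / 4 := by
    intro x α β
    have h := hHWC x α β
    simp only [hpd] at h
    have h4 : ∑ i, (2 * (A α).mulVec x i) * (2 * (A β).mulVec x i)
        = 4 * (((A α).mulVec x) ⬝ᵥ ((A β).mulVec x)) := by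
      rw [dotProduct, Finset.mul_sum]
      exact Finset.sum_congr rfl fun i _ => by ring
    rw [h4] at h
    linarith
  have hquadAB : ∀ (α β : Fin n) (x : Fin (m + m) → ℝ),
      x ⬝ᵥ (A α * A β).mulVec x = ((A α).mulVec x) ⬝ᵥ ((A β).mulVec x) := by
    intro α β x
    rw [← Matrix.mulVec_mulVec, Matrix.dotProduct_mulVec, ← Matrix.mulVec_transpose,
      (hsymm α).eq]
  have hanti : ∀ α β, α ≠ β → A α * A β + A β * A α = 0 := by
    intro α β hab
    have h0 : ∀ x : Fin (m + m) → ℝ, x ⬝ᵥ (A α * A β).mulVec x = 0 := by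
      intro x
      rw [hquadAB, hdot]
      simp [hab]
    have h := add_transpose_eq_zero_of_quad h0
    rwa [Matrix.transpose_mul, (hsymm α).eq, (hsymm β).eq] at h
  have hsq : ∀ α β, A α * A α = A β * A β := by
    intro α β
    have h0 : ∀ x : Fin (m + m) → ℝ, x ⬝ᵥ (A α * A α - A β * A β).mulVec x = 0 := by
      intro x
      rw [Matrix.sub_mulVec, dotProduct_sub, hquadAB, hquadAB, hdot, hdot]
      simp
    have hs : (A α * A α - A β * A β).IsSymm := by
      rw [Matrix.IsSymm, Matrix.transpose_sub, Matrix.transpose_mul, Matrix.transpose_mul,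
        (hsymm α).eq, (hsymm β).eq]
    exact sub_eq_zero.mp (symm_quad_zero hs h0)
  -- three distinct target indices
  set α₀ : Fin n := ⟨0, by omega⟩ with hα₀
  set α₁ : Fin n := ⟨1, by omega⟩ with hα₁
  set α₂ : Fin n := ⟨2, by omega⟩ with hα₂
  have h01 : α₀ ≠ α₁ := Fin.ne_of_val_ne (by simp [hα₀, hα₁])
  have h02 : α₀ ≠ α₂ := Fin.ne_of_val_ne (by simp [hα₀, hα₂])
  have h12 : α₁ ≠ α₂ := Fin.ne_of_val_ne (by simp [hα₁, hα₂])
  have hH : (A α₀).IsHermitian := isHermitian_of_isSymm (hsymm α₀)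
  set e := hH.eigenvalues with he
  have hbe : ∀ j, (A α₀).mulVec ⇑(hH.eigenvectorBasis j) = e j • ⇑(hH.eigenvectorBasis j) :=
    fun j => hH.mulVec_eigenvectorBasis j
  -- eigenvector transfer by A α₁
  have hneg : ∀ (v : Fin (m + m) → ℝ) (μ : ℝ), v ≠ 0 → (A α₀).mulVec v = μ • v →
      (A α₁).mulVec v ≠ 0 ∧
        (A α₀).mulVec ((A α₁).mulVec v) = (-μ) • (A α₁).mulVec v := by
    intro v μ hv0 hv
    refine ⟨fun h => hv0 (hAinj α₁ (h.trans (Matrix.mulVec_zero _).symm)), ?_⟩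
    exact anti_eigen (hanti α₀ α₁ h01) hv
  -- the candidate spectrum
  set T : Finset ℝ :=
    Finset.image lam Finset.univ ∪ Finset.image (fun i => -lam i) Finset.univ with hTdef
  have hdisj : Disjoint (Finset.image lam Finset.univ)
      (Finset.image (fun i => -lam i) Finset.univ) := by
    rw [Finset.disjoint_left]
    intro a ha hb
    obtain ⟨i, _, hi⟩ := Finset.mem_image.mp ha
    obtain ⟨j, _, hj⟩ := Finset.mem_image.mp hb
    have h1 := hpos i
    have h2 := hpos j
    rw [← hi] at hj
    linarith
  have hneginj : Function.Injective (fun i => -lam i) :=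
    fun a b hab => hlaminj (neg_injective hab)
  have hTcard : T.card = m + m := by
    rw [hTdef, Finset.card_union_of_disjoint hdisj,
      Finset.card_image_of_injective _ hlaminj,
      Finset.card_image_of_injective _ hneginj, Finset.card_univ, Fintype.card_fin]
  have hmemT : ∀ j, e j ∈ T := by
    intro j
    have hbj := hbe j
    have bnz := basis_nonzero hH j
    have hjne : e j ≠ 0 := by
      intro h
      apply bnz
      apply hAinj α₀
      rw [hbj, h, zero_smul, Matrix.mulVec_zero]
    rcases lt_trichotomy (e j) 0 with hlt | h0 | hgt
    · obtain ⟨hnz, hev⟩ := hneg _ (e j) bnz hbj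
      obtain ⟨i, hi⟩ := (hiff α₀ (-(e j)) (by linarith)).mp ⟨_, hnz, hev⟩
      refine Finset.mem_union_right _ (Finset.mem_image.mpr ⟨i, Finset.mem_univ i, ?_⟩)
      show -lam i = e j
      linarith
    · exact absurd h0 hjne
    · obtain ⟨i, hi⟩ := (hiff α₀ (e j) hgt).mp ⟨_, bnz, hbj⟩
      exact Finset.mem_union_left _ (Finset.mem_image.mpr ⟨i, Finset.mem_univ i, hi⟩)
  have hsurjT : ∀ t ∈ T, ∃ j, e j = t := by
    intro t ht
    rcases Finset.mem_union.mp ht with h | h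
    · obtain ⟨i, _, hi⟩ := Finset.mem_image.mp h
      obtain ⟨v, hv0, hv⟩ := (hiff α₀ (lam i) (hpos i)).mpr ⟨i, rfl⟩
      obtain ⟨j, hj⟩ := exists_eigen_index hH hv0 hv
      exact ⟨j, hj.trans hi⟩
    · obtain ⟨i, _, hi⟩ := Finset.mem_image.mp h
      obtain ⟨v, hv0, hv⟩ := (hiff α₀ (lam i) (hpos i)).mpr ⟨i, rfl⟩
      obtain ⟨hnz, hev⟩ := hneg v (lam i) hv0 hv
      obtain ⟨j, hj⟩ := exists_eigen_index hH hnz hev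
      exact ⟨j, hj.trans hi⟩
  have heinj : Function.Injective e := inj_of_card e T hTcard hmemT hsurjT
  -- final contradiction
  set μ := lam ⟨0, hm⟩ with hμdef
  have hμ : 0 < μ := hpos _
  obtain ⟨v, hv0, hv⟩ := (hiff α₀ μ hμ).mpr ⟨⟨0, hm⟩, rfl⟩
  obtain ⟨hu0, hue⟩ := hneg v μ hv0 hv
  have hw0 : (A α₂).mulVec v ≠ 0 :=
    fun h => hv0 (hAinj α₂ (h.trans (Matrix.mulVec_zero _).symm))
  have hwe : (A α₀).mulVec ((A α₂).mulVec v) = (-μ) • (A α₂).mulVec v :=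
    anti_eigen (hanti α₀ α₂ h02) hv
  obtain ⟨c, hc⟩ := eigvec_parallel hH heinj hue hwe hu0
  have h2 : (A α₁).mulVec ((A α₁).mulVec v) = (μ * μ) • v := by
    rw [Matrix.mulVec_mulVec, hsq α₁ α₀, ← Matrix.mulVec_mulVec, hv,
      Matrix.mulVec_smul, hv, smul_smul]
  have hkey : (A α₁).mulVec ((A α₂).mulVec v) = (c * (μ * μ)) • v := by
    rw [hc, Matrix.mulVec_smul, h2, smul_smul]
  have hM : (A α₁ * A α₂)ᵀ = -(A α₁ * A α₂) := by
    rw [Matrix.transpose_mul, (hsymm α₁).eq, (hsymm α₂).eq]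
    exact eq_neg_of_add_eq_zero_left (hanti α₂ α₁ h12.symm)
  have hzero : v ⬝ᵥ (A α₁ * A α₂).mulVec v = 0 := by
    have h1 : v ⬝ᵥ (A α₁ * A α₂)ᵀ.mulVec v = v ⬝ᵥ (A α₁ * A α₂).mulVec v :=
      dot_transpose _ v v
    rw [hM, Matrix.neg_mulVec, dotProduct_neg] at h1
    linarith
  rw [← Matrix.mulVec_mulVec, hkey, dotProduct_smul, smul_eq_mul] at hzero
  have hvv : v ⬝ᵥ v ≠ 0 := fun h => hv0 (dotProduct_self_eq_zero.mp h)
  have hc0 : c = 0 := by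
    rcases mul_eq_zero.mp hzero with h | h
    · rcases mul_eq_zero.mp h with h' | h'
      · exact h'
      · nlinarith
    · exact absurd h hvv
  apply hw0
  rw [hc, hc0, zero_smul]
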